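/- Let L be a finitary first-order language that is relational (no function symbols and no constant symbols) and let φ be an L-sentence. Then the following are equivalent: (i) for every nonempty L-structure A, A ⊨ θ(φ) iff A ⊨ φ (i.e., φ itself expresses θ(φ)); (ii) φ is logically equivalent over nonempty L-structures to a Σ⁰₁ (existential) L-sentence. -/

import Mathlib

/- STATEMENT 3: For a relational finitary first-order language L and an L-sentence φ,
φ itself expresses θ(φ) iff φ is logically equivalent (over nonempty L-structures)
to an existential (Σ⁰₁) L-sentence. -/

open FirstOrder Language

universe u v
universe w w'

namespace ThetaAux3

open FirstOrder.Language FirstOrder.Language.BoundedFormula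

variable {L : FirstOrder.Language.{u, v}} {α β : Type*} {M : Type w} [L.Structure M]

lemma isQF_foldr_sup {n : ℕ} (l : List (L.BoundedFormula α n)) (h : ∀ ψ ∈ l, ψ.IsQF) :
    (l.foldr (· ⊔ ·) ⊥).IsQF := by
  induction l with
  | nil => exact isQF_bot
  | cons a l ih => exact (h a (by simp)).sup (ih fun ψ hψ => h ψ (by simp [hψ]))

lemma isQF_foldr_inf {n : ℕ} (l : List (L.BoundedFormula α n)) (h : ∀ ψ ∈ l, ψ.IsQF) :
    (l.foldr (· ⊓ ·) ⊤).IsQF := by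
  induction l with
  | nil => exact IsQF.top
  | cons a l ih => exact (h a (by simp)).inf (ih fun ψ hψ => h ψ (by simp [hψ]))

lemma isQF_mapTermRel {L' : FirstOrder.Language} {g : ℕ → ℕ}
    (ft : ∀ n, L.Term (α ⊕ Fin n) → L'.Term (β ⊕ Fin (g n)))
    (fr : ∀ n, L.Relations n → L'.Relations n)
    (h' : ∀ n, L'.BoundedFormula β (g (n + 1)) → L'.BoundedFormula β (g n + 1))
    {n} {φ : L.BoundedFormula α n} (h : φ.IsQF) :
    (φ.mapTermRel ft fr h').IsQF := by
  induction h with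
  | falsum => exact isQF_bot
  | of_isAtomic ha =>
    cases ha with
    | equal t₁ t₂ => exact (IsAtomic.equal _ _).isQF
    | rel R ts => exact (IsAtomic.rel _ _).isQF
  | imp _ _ ih1 ih2 => exact ih1.imp ih2

lemma isQF_restrictFreeVar [DecidableEq α] {n : ℕ} {φ : L.BoundedFormula α n} (h : φ.IsQF)
    (f : φ.freeVarFinset → β) : (φ.restrictFreeVar f).IsQF := by
  induction φ with
  | falsum => exact isQF_bot
  | equal t₁ t₂ => exact (IsAtomic.equal _ _).isQF
  | rel R ts => exact (IsAtomic.rel _ _).isQF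
  | imp φ₁ φ₂ ih1 ih2 =>
    cases h with
    | of_isAtomic ha => cases ha
    | imp h1 h2 => exact (ih1 h1 _).imp (ih2 h2 _)
  | all φ ih => exact absurd h (not_all_isQF _)

lemma isQF_equivSentence_symm {γ : Type*} {σ : L[[γ]].Sentence} (h : σ.IsQF) :
    (Formula.equivSentence.symm σ).IsQF := by
  have h1 : (constantsVarsEquiv σ).IsQF := isQF_mapTermRel _ _ _ h
  have h2 : ((relabelEquiv (Equiv.sumEmpty γ Empty)) (constantsVarsEquiv σ)).IsQF :=
    isQF_mapTermRel _ _ _ h1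
  exact h2

lemma realize_castLE_qf {m n : ℕ} {φ : L.BoundedFormula α m} (hq : φ.IsQF) (h : m ≤ n)
    {v : α → M} {xs : Fin n → M} :
    (φ.castLE h).Realize v xs ↔ φ.Realize v (xs ∘ Fin.castLE h) := by
  induction hq with
  | falsum => exact Iff.rfl
  | of_isAtomic ha =>
    cases ha with
    | equal t₁ t₂ =>
      simp [Term.bdEqual, castLE, BoundedFormula.Realize, Term.realize_relabel, Sum.elim_comp_map]
    | rel R ts =>
      simp [Relations.boundedFormula, castLE, BoundedFormula.Realize, Term.realize_relabel,
        Sum.elim_comp_map]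
  | imp _ _ ih1 ih2 => simp [castLE, ih1, ih2]

lemma exs_up {k : ℕ} {ψ : L.BoundedFormula Empty k} (hq : ψ.IsQF)
    (S : L.Substructure M) (h : S ⊨ ψ.exs) : M ⊨ ψ.exs := by
  obtain ⟨xs, hxs⟩ := BoundedFormula.realize_exs.1 h
  refine BoundedFormula.realize_exs.2 ⟨S.subtype ∘ xs, ?_⟩
  have h2 := (hq.realize_embedding S.subtype (v := default) (xs := xs)).2 hxs
  have h3 : (S.subtype ∘ (default : Empty → S) : Empty → M) = default :=
    funext fun x => x.elim
  rwa [h3] at h2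

variable {L : FirstOrder.Language.{u, v}} [L.IsRelational] {M : Type w} [L.Structure M]

noncomputable def embeddingOfQFDiagram {N : Type w'} [L[[M]].Structure N] [L.Structure N]
    [(L.lhomWithConstants M).IsExpansionOn N]
    (hD : ∀ σ : L[[M]].Sentence, σ.IsQF → M ⊨ σ → N ⊨ σ) : M ↪[L] N where
  toFun := fun a => ((L.con a : N))
  inj' := by
    intro a b hab
    by_contra hne
    have hM : M ⊨ (((L.con a).term.bdEqual (L.con b).term).not : L[[M]].Sentence) := by
      simp only [Sentence.Realize, Formula.Realize, BoundedFormula.realize_not,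
        BoundedFormula.realize_bdEqual, Term.realize_constants]
      exact hne
    have hN := hD _ ((IsAtomic.equal _ _).isQF.not) hM
    simp only [Sentence.Realize, Formula.Realize, BoundedFormula.realize_not,
      BoundedFormula.realize_bdEqual, Term.realize_constants] at hN
    exact hN hab
  map_fun' := fun {n} f => isEmptyElim f
  map_rel' := by
    intro n r x
    show Structure.RelMap r ((fun a => ((L.con a : N))) ∘ x) ↔ Structure.RelMap r x
    have hRel : ∀ y : Fin n → N,
        @Structure.RelMap (L[[M]]) N _ n (Sum.inl r) y = Structure.RelMap r y :=
      fun y => (L.lhomWithConstants M).map_onRelation r y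
    by_cases hx : Structure.RelMap r x
    · have hM : M ⊨ ((BoundedFormula.rel (Sum.inl r) (fun i => (L.con (x i)).term)) :
          L[[M]].BoundedFormula Empty 0) := by
        simp only [Sentence.Realize, Formula.Realize, BoundedFormula.Realize,
          Term.realize_constants]
        exact hx
      have hN := hD _ ((IsAtomic.rel _ _).isQF) hM
      simp only [Sentence.Realize, Formula.Realize, BoundedFormula.Realize,
        Term.realize_constants] at hN
      have hN' : @Structure.RelMap (L[[M]]) N _ n (Sum.inl r)
          ((fun a => ((L.con a : N))) ∘ x) := by
        simpa [Relations.boundedFormula, BoundedFormula.Realize, Term.realize_constants,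
          Function.comp_def] using hN
      rw [hRel] at hN'
      exact iff_of_true hN' hx
    · have hM : M ⊨ (((BoundedFormula.rel (Sum.inl r) (fun i => (L.con (x i)).term)).not) :
          L[[M]].BoundedFormula Empty 0) := by
        simp only [Sentence.Realize, Formula.Realize, BoundedFormula.realize_not,
          BoundedFormula.Realize, Term.realize_constants]
        exact hx
      have hN := hD _ ((IsAtomic.rel _ _).isQF.not) hM
      simp only [Sentence.Realize, Formula.Realize, BoundedFormula.realize_not,
        BoundedFormula.Realize, Term.realize_constants] at hN
      have hN' : ¬ @Structure.RelMap (L[[M]]) N _ n (Sum.inl r)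
          ((fun a => ((L.con a : N))) ∘ x) := by
        simpa [Relations.boundedFormula, BoundedFormula.Realize, Term.realize_constants,
          Function.comp_def] using hN
      rw [hRel] at hN'
      exact iff_of_false hN' hx

/-- The set of universal sentences implied by `¬φ` (over nonempty structures). -/
def Theta (L : FirstOrder.Language.{u, v}) (φ : L.Sentence) : L.Theory :=
  {σ | (∃ (k : ℕ) (χ : L.BoundedFormula Empty k), χ.IsQF ∧ σ = χ.alls) ∧
    ∀ (N : Type (max u v)) [L.Structure N] [Nonempty N], ¬ N ⊨ φ → N ⊨ σ}

omit [L.IsRelational] in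
lemma theta_models_not [L.IsRelational] (φ : L.Sentence)
    (H : ∀ (M : Type (max u v)) [L.Structure M] [Nonempty M],
        (∃ S : L.Substructure M, Nonempty S ∧ S ⊨ φ) ↔ M ⊨ φ)
    (M : Type (max u v)) [L.Structure M] [Nonempty M]
    (hΘ : ∀ σ ∈ Theta L φ, M ⊨ σ) (hφM : M ⊨ φ) : False := by
  classical
  set φ' : L[[M]].Sentence := (L.lhomWithConstants M).onSentence φ with hφ'def
  set D : L[[M]].Theory := {σ | BoundedFormula.IsQF σ ∧ M ⊨ σ} with hDdef
  by_cases hsat : ((D ∪ {Formula.not φ'}) : L[[M]].Theory).IsSatisfiable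
  · obtain ⟨N0⟩ := hsat
    set N := N0.Carrier with hNdef
    letI := N0.struc; haveI := N0.is_model; haveI := N0.nonempty'
    letI : L.Structure N := (L.lhomWithConstants M).reduct N
    haveI : (L.lhomWithConstants M).IsExpansionOn N := LHom.isExpansionOn_reduct _ _
    have hDsub : ∀ σ : L[[M]].Sentence, σ.IsQF → M ⊨ σ → N ⊨ σ := fun σ hq hM =>
      Theory.realize_sentence_of_mem (D ∪ {Formula.not φ'})
        (Set.mem_union_left _ ⟨hq, hM⟩)
    let f := embeddingOfQFDiagram hDsub
    have hS : (f.toHom.range) ⊨ φ := (StrongHomClass.realize_sentence f.equivRange φ).1 hφM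
    have hNφ : N ⊨ φ := (H N).1
      ⟨f.toHom.range, ⟨⟨f (Classical.arbitrary M), Hom.mem_range_self _ _⟩⟩, hS⟩
    have hNφ' : N ⊨ Formula.not φ' :=
      Theory.realize_sentence_of_mem (D ∪ {Formula.not φ'}) (Set.mem_union_right _ rfl)
    rw [Sentence.realize_not] at hNφ'
    exact hNφ' ((LHom.realize_onSentence (M := N) (L.lhomWithConstants M) φ).2 hNφ)
  · have hfin : ¬ (D ∪ {Formula.not φ'}).IsFinitelySatisfiable := fun h =>
      hsat (Theory.isSatisfiable_iff_isFinitelySatisfiable.2 h)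
    rw [Theory.IsFinitelySatisfiable] at hfin
    push_neg at hfin
    obtain ⟨T0, hT0sub, hT0unsat⟩ := hfin
    set T1 : Finset (L[[M]].Sentence) := T0.erase (Formula.not φ') with hT1def
    have hT1D : ∀ σ ∈ T1, σ.IsQF ∧ M ⊨ σ := by
      intro σ hσ
      obtain ⟨hne, hmem⟩ := Finset.mem_erase.1 hσ
      rcases hT0sub hmem with h | h
      · exact h
      · exact absurd (Set.mem_singleton_iff.1 h) hne
    have hT1unsat : ¬ Theory.IsSatisfiable (L := L[[M]]) (↑T1 ∪ {Formula.not φ'}) := by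
      intro h
      apply hT0unsat
      apply h.mono
      intro σ hσ
      by_cases h' : σ = Formula.not φ'
      · exact Set.mem_union_right _ h'
      · exact Set.mem_union_left _
          (by exact_mod_cast Finset.mem_erase.2 ⟨h', by exact_mod_cast hσ⟩)
    set δ : L[[M]].Sentence := T1.toList.foldr (· ⊓ ·) ⊤ with hδdef
    have hδQF : δ.IsQF := isQF_foldr_inf _ (fun σ hσ => (hT1D σ (Finset.mem_toList.1 hσ)).1)
    have hMδ : M ⊨ δ := (BoundedFormula.realize_foldr_inf _ _ _).2
      (fun σ hσ => (hT1D σ (Finset.mem_toList.1 hσ)).2)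
    set δ'' : L.Formula M := Formula.equivSentence.symm δ with hδ''def
    have hδ''QF : δ''.IsQF := isQF_equivSentence_symm hδQF
    set s : Set M := ↑(δ''.freeVarFinset) with hsdef
    have hsub : ↑(δ''.freeVarFinset) ⊆ s := subset_rfl
    set θ₀ : L.Formula s := δ''.restrictFreeVar (Set.inclusion hsub) with hθdef
    have hθQF : θ₀.IsQF := isQF_restrictFreeVar hδ''QF _
    haveI : Fintype s := FinsetCoe.fintype _
    set e := Fintype.equivFin ↥s with hedef
    set m := Fintype.card ↥s with hmdef
    set χ : L.BoundedFormula Empty (m + 0) :=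
      BoundedFormula.relabel (fun (x : s) => (Sum.inr (e x) : Empty ⊕ Fin m)) θ₀.not
      with hχdef
    have hχQF : χ.IsQF := (hθQF.not).relabel _
    have hcore : ∀ (N : Type (max u v)) [L.Structure N] [Nonempty N], ¬ N ⊨ φ →
        ∀ w : s → N, ¬ θ₀.Realize w := by
      intro N _ _ hNφ w hw
      let vN : M → N := fun a => if h : a ∈ s then w ⟨a, h⟩ else Classical.arbitrary N
      have hvw : (vN ∘ (Subtype.val : s → M)) = w := by
        funext x
        simp only [Function.comp_apply, vN]
        rw [dif_pos x.2]
      have hδ''N : δ''.Realize vN := by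
        have hrw := (BoundedFormula.realize_restrictFreeVar' (φ := δ'') hsub (v := vN)
          (xs := default)).1
        exact hrw (by rw [hvw]; exact hw)
      letI : (constantsOn M).Structure N := constantsOn.structure vN
      have hNδ : N ⊨ δ := (Formula.realize_equivSentence_symm N δ vN).1 hδ''N
      have hNT1 : ∀ σ ∈ (↑T1 : Set (L[[M]].Sentence)), N ⊨ σ := by
        intro σ hσ
        exact (BoundedFormula.realize_foldr_inf _ _ _).1 hNδ σ
          (Finset.mem_toList.2 (by exact_mod_cast hσ))
      have hNφ' : N ⊨ Formula.not φ' := by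
        rw [Sentence.realize_not]
        intro h
        exact hNφ ((LHom.realize_onSentence (M := N) (L.lhomWithConstants M) φ).1 h)
      apply hT1unsat
      haveI : N ⊨ ((↑T1 ∪ {Formula.not φ'} : L[[M]].Theory)) := (Theory.model_iff _).2 (by
        intro ψ hψ
        rcases hψ with h | h
        · exact hNT1 ψ h
        · rw [Set.mem_singleton_iff.1 h]; exact hNφ')
      exact Theory.Model.isSatisfiable N
    have hσΘ : χ.alls ∈ Theta L φ := by
      refine ⟨⟨_, χ, hχQF, rfl⟩, ?_⟩
      intro N _ _ hNφ
      refine BoundedFormula.realize_alls.2 ?_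
      intro xs
      rw [BoundedFormula.realize_relabel, BoundedFormula.realize_not]
      intro hreal
      apply hcore N hNφ (fun x => xs (Fin.castAdd 0 (e x)))
      have hxs0 : (xs ∘ Fin.natAdd m : Fin 0 → N) = default := funext fun i => i.elim0
      rw [hxs0] at hreal
      exact hreal
    have hMσ : M ⊨ χ.alls := hΘ _ hσΘ
    have hδ''M : δ''.Realize (fun a => ((L.con a : M))) :=
      (Formula.realize_equivSentence_symm_con M δ).2 hMδ
    have hθM : θ₀.Realize (fun x : s => (x : M)) := by
      have h2 := (BoundedFormula.realize_restrictFreeVar' (φ := δ'') hsub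
        (v := fun a => ((L.con a : M))) (xs := default)).2 hδ''M
      exact h2
    have hall := BoundedFormula.realize_alls.1 hMσ (fun i => ((e.symm i : s) : M))
    rw [BoundedFormula.realize_relabel, BoundedFormula.realize_not] at hall
    apply hall
    have hθM' : FirstOrder.Language.BoundedFormula.Realize θ₀ (fun x : s => (x : M))
        (default : Fin 0 → M) := hθM
    convert hθM' using 2
    · rename_i x
      simp only [Function.comp_apply, Sum.elim_inr]
      have hc : (Fin.castAdd 0 (e x)) = e x := Fin.ext rfl
      rw [hc, Equiv.symm_apply_apply]

end ThetaAux3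


theorem theta_self_expressible_iff_existential
    {L : FirstOrder.Language.{u, v}} [L.IsRelational] (φ : L.Sentence) :
    (∀ (M : Type (max u v)) [L.Structure M] [Nonempty M],
        (∃ S : L.Substructure M, Nonempty S ∧ S ⊨ φ) ↔ M ⊨ φ) ↔
      (∃ (k : ℕ) (ψ : L.BoundedFormula Empty k), ψ.IsQF ∧
        ∀ (M : Type (max u v)) [L.Structure M] [Nonempty M],
          M ⊨ φ ↔ M ⊨ ψ.exs) := by
  classical
  constructor
  · intro H
    have hmodels : ThetaAux3.Theta L φ ⊨ᵇ Formula.not φ := by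
      rw [Theory.models_sentence_iff]
      intro M0
      rw [Sentence.realize_not]
      intro hφM
      exact ThetaAux3.theta_models_not φ H M0
        (fun σ hσ => Theory.realize_sentence_of_mem (ThetaAux3.Theta L φ) hσ) hφM
    obtain ⟨Θ₀, hsub, hmod⟩ := Theory.models_iff_finset_models.1 hmodels
    have key : ∀ (M : Type (max u v)) [L.Structure M] [Nonempty M],
        M ⊨ φ ↔ ∃ σ ∈ Θ₀, ¬ M ⊨ σ := by
      intro M _ _
      constructor
      · intro hφM
        by_contra hcon
        push_neg at hcon
        haveI : M ⊨ (↑Θ₀ : L.Theory) :=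
          (Theory.model_iff _).2 (fun ψ hψ => hcon ψ (by exact_mod_cast hψ))
        have hnot := hmod.realize_sentence M
        rw [Sentence.realize_not] at hnot
        exact hnot hφM
      · rintro ⟨σ, hσ, hnσ⟩
        by_contra hφM
        exact hnσ ((hsub hσ).2 M hφM)
    have hshape : ∀ x : {σ // σ ∈ Θ₀}, ∃ (k : ℕ) (χ : L.BoundedFormula Empty k),
        χ.IsQF ∧ x.1 = χ.alls := fun x => (hsub x.2).1
    choose kf χf hQFf hallsf using hshape
    set K := Θ₀.attach.sup kf with hK
    have hle : ∀ x : {σ // σ ∈ Θ₀}, kf x ≤ K := fun x => Finset.le_sup (Finset.mem_attach _ x)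
    set lψ : List (L.BoundedFormula Empty K) :=
      Θ₀.attach.toList.map (fun x => (χf x).not.castLE (hle x)) with hlψ
    refine ⟨K, lψ.foldr (· ⊔ ·) ⊥, ThetaAux3.isQF_foldr_sup _ ?_, ?_⟩
    · intro ψ hψ
      obtain ⟨x, _, rfl⟩ := List.mem_map.1 hψ
      exact ((hQFf x).not).castLE
    · intro M _ _
      rw [key M]
      constructor
      · rintro ⟨σ, hσ, hnσ⟩
        set x : {σ // σ ∈ Θ₀} := ⟨σ, hσ⟩ with hx
        have hσalls : σ = (χf x).alls := hallsf x
        rw [hσalls] at hnσ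
        have hnall : ¬ ∀ ys : Fin (kf x) → M, (χf x).Realize default ys := fun h =>
          hnσ (BoundedFormula.realize_alls.2 h)
        push_neg at hnall
        obtain ⟨ys, hys⟩ := hnall
        refine BoundedFormula.realize_exs.2
          ⟨fun (i : Fin K) => if h : (i : ℕ) < kf x then ys ⟨i, h⟩ else Classical.arbitrary M, ?_⟩
        refine (BoundedFormula.realize_foldr_sup _ _ _).2
          ⟨(χf x).not.castLE (hle x),
            List.mem_map.2 ⟨x, Finset.mem_toList.2 (Finset.mem_attach _ _), rfl⟩, ?_⟩
        rw [ThetaAux3.realize_castLE_qf ((hQFf x).not) (hle x), BoundedFormula.realize_not]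
        have hcomp : ((fun (i : Fin K) => if h : (i : ℕ) < kf x then ys ⟨i, h⟩ else
            Classical.arbitrary M) ∘ Fin.castLE (hle x)) = ys := by
          funext j
          simp only [Function.comp_apply, Fin.coe_castLE]
          rw [dif_pos j.isLt]
        rw [hcomp]
        exact hys
      · intro hexs
        obtain ⟨xs, hxs⟩ := BoundedFormula.realize_exs.1 hexs
        obtain ⟨ψ, hψmem, hψreal⟩ := (BoundedFormula.realize_foldr_sup _ _ _).1 hxs
        obtain ⟨x, _, rfl⟩ := List.mem_map.1 hψmem
        refine ⟨x.1, x.2, ?_⟩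
        rw [hallsf x]
        intro hall
        rw [ThetaAux3.realize_castLE_qf ((hQFf x).not) (hle x),
          BoundedFormula.realize_not] at hψreal
        exact hψreal (BoundedFormula.realize_alls.1 hall _)
  · rintro ⟨k, ψ, hq, hiff⟩ M _ _
    constructor
    · rintro ⟨S, hne, hS⟩
      haveI : Nonempty S := hne
      exact (hiff M).2 (ThetaAux3.exs_up hq S ((hiff S).1 hS))
    · intro hM
      refine ⟨⊤, ⟨⟨Classical.arbitrary M, Substructure.mem_top _⟩⟩, ?_⟩
      exact (StrongHomClass.realize_sentence Substructure.topEquiv φ).2 hM
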